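/- Let L be a solvable Leibniz A-algebra. Then Z(L) ∩ L² = 0, where L² = [L,L] and Z(L) is the centre of L. -/

import Mathlib

/-- A (right) Leibniz algebra structure on an `F`-vector space `L`:
a bilinear bracket satisfying `[x,[y,z]] = [[x,y],z] - [[x,z],y]`. -/
structure LeibnizAlg (F : Type*) (L : Type*) [Field F] [AddCommGroup L] [Module F L] where
  bracket : L →ₗ[F] L →ₗ[F] L
  leibniz : ∀ x y z : L,
    bracket x (bracket y z) = bracket (bracket x y) z - bracket (bracket x z) y

namespace LeibnizAlg

variable {F : Type*} {L : Type*} [Field F] [AddCommGroup L] [Module F L]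

/-- The product `[M, N]` of two subspaces: the span of all brackets `[m, n]`. -/
def prod (A : LeibnizAlg F L) (M N : Submodule F L) : Submodule F L :=
  Submodule.span F {z : L | ∃ m ∈ M, ∃ n ∈ N, z = A.bracket m n}

/-- A subalgebra: a subspace closed under the product. -/
def IsSubalgebra (A : LeibnizAlg F L) (S : Submodule F L) : Prop :=
  A.prod S S ≤ S

/-- A (two-sided) ideal: `[I, L] ⊆ I` and `[L, I] ⊆ I`. -/
def IsIdeal (A : LeibnizAlg F L) (I : Submodule F L) : Prop :=
  A.prod I ⊤ ≤ I ∧ A.prod ⊤ I ≤ I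

/-- Lower central series of a subspace `U`: `lcs U 0 = U = U¹`,
`lcs U k = U^(k+1)`, i.e. `lcs U (k+1) = [lcs U k, U]`. -/
def lcs (A : LeibnizAlg F L) (U : Submodule F L) : ℕ → Submodule F L
  | 0 => U
  | k + 1 => A.prod (lcs A U k) U

/-- `U` is nilpotent: `U^(n+1) = 0` for some `n`. -/
def IsNilpotentSub (A : LeibnizAlg F L) (U : Submodule F L) : Prop :=
  ∃ n : ℕ, A.lcs U n = ⊥

/-- `U` is abelian: `[U, U] = 0`. -/
def IsAbelian (A : LeibnizAlg F L) (U : Submodule F L) : Prop :=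
  A.prod U U = ⊥

/-- An `A`-algebra: every nilpotent subalgebra is abelian. -/
def IsAAlgebra (A : LeibnizAlg F L) : Prop :=
  ∀ U : Submodule F L, A.IsSubalgebra U → A.IsNilpotentSub U → A.IsAbelian U

/-- Derived series: `derSeries 0 = L`, `derSeries (k+1) = [derSeries k, derSeries k]`. -/
def derSeries (A : LeibnizAlg F L) : ℕ → Submodule F L
  | 0 => ⊤
  | k + 1 => A.prod (derSeries A k) (derSeries A k)

/-- `L` is solvable: some term of the derived series vanishes. -/
def IsSolvable (A : LeibnizAlg F L) : Prop :=
  ∃ n : ℕ, A.derSeries n = ⊥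

/-- The centralizer `Z_L(U)` of a subspace `U`. -/
def centralizer (A : LeibnizAlg F L) (U : Submodule F L) : Submodule F L where
  carrier := {x : L | ∀ u ∈ U, A.bracket x u = 0 ∧ A.bracket u x = 0}
  add_mem' := by
    intro a b ha hb u hu
    refine ⟨?_, ?_⟩
    · rw [map_add, LinearMap.add_apply, (ha u hu).1, (hb u hu).1, add_zero]
    · rw [map_add, (ha u hu).2, (hb u hu).2, add_zero]
  zero_mem' := by
    intro u hu
    refine ⟨?_, ?_⟩
    · rw [map_zero, LinearMap.zero_apply]
    · rw [map_zero]
  smul_mem' := by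
    intro c a ha u hu
    refine ⟨?_, ?_⟩
    · rw [map_smul, LinearMap.smul_apply, (ha u hu).1, smul_zero]
    · rw [map_smul, (ha u hu).2, smul_zero]

/-- The centre of the subalgebra `M`: elements of `M` centralizing `M`. -/
def centerOf (A : LeibnizAlg F L) (M : Submodule F L) : Submodule F L :=
  M ⊓ A.centralizer M

/-- `N` is the nilradical: the largest nilpotent ideal. -/
def IsNilradical (A : LeibnizAlg F L) (N : Submodule F L) : Prop :=
  A.IsIdeal N ∧ A.IsNilpotentSub N ∧
    ∀ I : Submodule F L, A.IsIdeal I → A.IsNilpotentSub I → I ≤ N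

/-- A minimal ideal: a nonzero ideal containing no ideal other than `0` and itself. -/
def IsMinimalIdeal (A : LeibnizAlg F L) (I : Submodule F L) : Prop :=
  A.IsIdeal I ∧ I ≠ ⊥ ∧ ∀ J : Submodule F L, A.IsIdeal J → J ≤ I → J = ⊥ ∨ J = I

/-- A maximal subalgebra. -/
def IsMaximalSubalgebra (A : LeibnizAlg F L) (M : Submodule F L) : Prop :=
  A.IsSubalgebra M ∧ M ≠ ⊤ ∧
    ∀ S : Submodule F L, A.IsSubalgebra S → M ≤ S → S = M ∨ S = ⊤

/-- `L` is φ-free: every ideal contained in all maximal subalgebras is zero. -/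
def IsPhiFree (A : LeibnizAlg F L) : Prop :=
  ∀ I : Submodule F L, A.IsIdeal I →
    (∀ M : Submodule F L, A.IsMaximalSubalgebra M → I ≤ M) → I = ⊥

/-- `Asoc L`: the sum of the abelian minimal ideals. -/
def asoc (A : LeibnizAlg F L) : Submodule F L :=
  sSup {I : Submodule F L | A.IsMinimalIdeal I ∧ A.IsAbelian I}

/-- A Cartan subalgebra: a nilpotent, self-normalizing subalgebra. -/
def IsCartan (A : LeibnizAlg F L) (C : Submodule F L) : Prop :=
  A.IsSubalgebra C ∧ A.IsNilpotentSub C ∧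
    ∀ x : L, (∀ c ∈ C, A.bracket x c ∈ C ∧ A.bracket c x ∈ C) → x ∈ C

/-- A maximal nilpotent subalgebra. -/
def IsMaxNilpotentSubalgebra (A : LeibnizAlg F L) (U : Submodule F L) : Prop :=
  A.IsSubalgebra U ∧ A.IsNilpotentSub U ∧
    ∀ V : Submodule F L, A.IsSubalgebra V → A.IsNilpotentSub V → U ≤ V → V = U

end LeibnizAlg

namespace LeibnizAlg

variable {F : Type*} {L : Type*} [Field F] [AddCommGroup L] [Module F L]
variable (A : LeibnizAlg F L)


lemma mem_prod {M N : Submodule F L} {m n : L} (hm : m ∈ M) (hn : n ∈ N) :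
    A.bracket m n ∈ A.prod M N :=
  Submodule.subset_span ⟨m, hm, n, hn, rfl⟩

lemma prod_le {M N P : Submodule F L}
    (h : ∀ m ∈ M, ∀ n ∈ N, A.bracket m n ∈ P) : A.prod M N ≤ P := by
  rw [prod, Submodule.span_le]
  rintro _ ⟨m, hm, n, hn, rfl⟩
  exact h m hm n hn

lemma prod_mono {M N M' N' : Submodule F L} (hM : M ≤ M') (hN : N ≤ N') :
    A.prod M N ≤ A.prod M' N' :=
  A.prod_le fun m hm n hn => A.mem_prod (hM hm) (hN hn)

lemma prod_sup_left {M₁ M₂ N : Submodule F L} :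
    A.prod (M₁ ⊔ M₂) N ≤ A.prod M₁ N ⊔ A.prod M₂ N := by
  refine A.prod_le fun m hm n hn => ?_
  obtain ⟨a, ha, b, hb, rfl⟩ := Submodule.mem_sup.mp hm
  rw [map_add, LinearMap.add_apply]
  exact Submodule.add_mem_sup (A.mem_prod ha hn) (A.mem_prod hb hn)

lemma prod_sup_right {M N₁ N₂ : Submodule F L} :
    A.prod M (N₁ ⊔ N₂) ≤ A.prod M N₁ ⊔ A.prod M N₂ := by
  refine A.prod_le fun m hm n hn => ?_
  obtain ⟨a, ha, b, hb, rfl⟩ := Submodule.mem_sup.mp hn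
  rw [map_add]
  exact Submodule.add_mem_sup (A.mem_prod hm ha) (A.mem_prod hm hb)

/-- Right multiplication operator `x ↦ [x, c]`. -/
def rmul (c : L) : L →ₗ[F] L := A.bracket.flip c

@[simp] lemma rmul_apply (c x : L) : A.rmul c x = A.bracket x c := rfl

/-- Right multiplications are derivations: `[[u,v],c] = [u,[v,c]] + [[u,c],v]`. -/
lemma rmul_bracket (c u v : L) :
    A.rmul c (A.bracket u v) = A.bracket u (A.rmul c v) + A.bracket (A.rmul c u) v := by
  simp only [rmul_apply]
  rw [A.leibniz u v c]
  abel



end LeibnizAlg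

namespace LeibnizAlg

variable {F : Type*} {L : Type*} [Field F] [AddCommGroup L] [Module F L]
variable (A : LeibnizAlg F L)

section Fitting

variable [FiniteDimensional F L]

open Submodule FiniteDimensional

/-- The stabilization exponent. -/
noncomputable def fexp (F L : Type*) [Field F] [AddCommGroup L] [Module F L] : ℕ :=
  Module.finrank F L + 1

lemma fexp_pos : 1 ≤ fexp F L := Nat.le_add_left 1 _

variable (f : L →ₗ[F] L) {X : Submodule F L}

lemma map_pow_le (hX : Submodule.map f X ≤ X) (k : ℕ) : Submodule.map (f ^ k) X ≤ X := by
  induction k with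
  | zero => rw [pow_zero, Module.End.one_eq_id, Submodule.map_id]
  | succ k ih =>
      rw [pow_succ, Module.End.mul_eq_comp, Submodule.map_comp]
      exact le_trans (Submodule.map_mono hX) ih

lemma map_pow_antitone (hX : Submodule.map f X ≤ X) {k m : ℕ} (h : k ≤ m) :
    Submodule.map (f ^ m) X ≤ Submodule.map (f ^ k) X := by
  obtain ⟨j, rfl⟩ := Nat.exists_eq_add_of_le h
  rw [pow_add, Module.End.mul_eq_comp, Submodule.map_comp]
  exact Submodule.map_mono (map_pow_le f hX j)

lemma exists_map_pow_stab (hX : Submodule.map f X ≤ X) :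
    ∃ k ≤ Module.finrank F L, Submodule.map (f ^ (k+1)) X = Submodule.map (f ^ k) X := by
  by_contra hcon
  push_neg at hcon
  have hlt : ∀ k ≤ Module.finrank F L,
      Submodule.map (f ^ (k+1)) X < Submodule.map (f ^ k) X := fun k hk =>
    lt_of_le_of_ne (map_pow_antitone f hX (Nat.le_succ k)) (hcon k hk)
  have key : ∀ k ≤ Module.finrank F L + 1,
      Module.finrank F (Submodule.map (f ^ k) X) + k ≤ Module.finrank F X := by
    intro k hk
    induction k with
    | zero => rw [pow_zero, Module.End.one_eq_id, Submodule.map_id]; omega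
    | succ n ih =>
      have h1 : Module.finrank F (Submodule.map (f ^ (n+1)) X)
          < Module.finrank F (Submodule.map (f ^ n) X) :=
        Submodule.finrank_lt_finrank_of_lt (hlt n (Nat.lt_succ_iff.mp hk))
      have h2 := ih (le_trans (Nat.le_succ n) hk)
      omega
  have h3 := key (Module.finrank F L + 1) le_rfl
  have h4 : Module.finrank F X ≤ Module.finrank F L := Submodule.finrank_le X
  omega

lemma map_pow_stab_forward (hX : Submodule.map f X ≤ X) {k : ℕ}
    (h : Submodule.map (f ^ (k+1)) X = Submodule.map (f ^ k) X) :
    ∀ m, k ≤ m → Submodule.map (f ^ m) X = Submodule.map (f ^ k) X := by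
  intro m hm
  obtain ⟨j, rfl⟩ := Nat.exists_eq_add_of_le hm
  induction j with
  | zero => rfl
  | succ n ih =>
    have e1 : k + (n+1) = (k + n) + 1 := rfl
    rw [e1, pow_succ', Module.End.mul_eq_comp, Submodule.map_comp, ih (Nat.le_add_right k n),
      ← Submodule.map_comp, ← Module.End.mul_eq_comp, ← pow_succ', h]

lemma map_pow_fexp_stab (hX : Submodule.map f X ≤ X) {m : ℕ} (hm : fexp F L ≤ m) :
    Submodule.map (f ^ m) X = Submodule.map (f ^ (fexp F L)) X := by
  obtain ⟨k, hk, hstab⟩ := exists_map_pow_stab f hX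
  rw [map_pow_stab_forward f hX hstab m (le_trans (le_trans hk (Nat.le_succ _)) hm),
    map_pow_stab_forward f hX hstab (fexp F L) (le_trans hk (Nat.le_succ _))]

lemma ker_pow_fexp_stab {m : ℕ} (hm : fexp F L ≤ m) :
    LinearMap.ker (f ^ m) = LinearMap.ker (f ^ (fexp F L)) := by
  have h1 : Module.finrank F L ≤ m := le_trans (Nat.le_succ _) hm
  have h2 : Module.finrank F L ≤ fexp F L := Nat.le_succ _
  rw [Module.End.ker_pow_eq_ker_pow_finrank_of_le h1,
    ← Module.End.ker_pow_eq_ker_pow_finrank_of_le h2]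

end Fitting

end LeibnizAlg

namespace LeibnizAlg

variable {F : Type*} {L : Type*} [Field F] [AddCommGroup L] [Module F L]
variable (A : LeibnizAlg F L) [FiniteDimensional F L]

open Submodule

section FittingDecomp

variable (f : L →ₗ[F] L) {X : Submodule F L}

local notation "s" => fexp F L

lemma ker_pow_mono {k m : ℕ} (h : k ≤ m) : LinearMap.ker (f ^ k) ≤ LinearMap.ker (f ^ m) := by
  obtain ⟨j, rfl⟩ := Nat.exists_eq_add_of_le h
  intro x hx
  rw [LinearMap.mem_ker] at hx ⊢
  rw [add_comm, pow_add, Module.End.mul_apply, hx, map_zero]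

lemma fitting_decomp (hX : Submodule.map f X ≤ X) :
    X ≤ (X ⊓ LinearMap.ker (f ^ s)) ⊔ Submodule.map (f ^ s) X := by
  intro x hx
  have h1 : (f ^ s) x ∈ Submodule.map (f ^ (s + s)) X := by
    rw [map_pow_fexp_stab f hX (Nat.le_add_right _ _)]
    exact ⟨x, hx, rfl⟩
  obtain ⟨y, hy, hfy⟩ := h1
  have h2 : (f ^ s) ((f ^ s) y) = (f ^ s) x := by
    rw [← Module.End.mul_apply, ← pow_add, hfy]
  refine Submodule.mem_sup.mpr ⟨x - (f ^ s) y, Submodule.mem_inf.mpr ⟨?_, ?_⟩,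
    (f ^ s) y, ⟨y, hy, rfl⟩, by abel⟩
  · exact X.sub_mem hx (map_pow_le f hX s ⟨y, hy, rfl⟩)
  · show x - (f ^ s) y ∈ LinearMap.ker (f ^ s)
    rw [LinearMap.mem_ker, map_sub, h2, sub_self]

lemma fitting_disjoint (hX : Submodule.map f X ≤ X) :
    (X ⊓ LinearMap.ker (f ^ s)) ⊓ Submodule.map (f ^ s) X = ⊥ := by
  rw [eq_bot_iff]
  rintro v ⟨⟨-, hker⟩, w, hw, rfl⟩
  have h0 : (f ^ (s + s)) w = 0 := by
    rw [pow_add, Module.End.mul_apply]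
    exact LinearMap.mem_ker.mp (SetLike.mem_coe.mp hker)
  have h1 : w ∈ LinearMap.ker (f ^ s) := by
    rw [← ker_pow_fexp_stab f (Nat.le_add_right s s)]
    exact LinearMap.mem_ker.mpr h0
  rw [Submodule.mem_bot]
  exact LinearMap.mem_ker.mp h1

lemma fitting_map_eq (hX : Submodule.map f X ≤ X) :
    Submodule.map f (Submodule.map (f ^ s) X) = Submodule.map (f ^ s) X := by
  rw [← Submodule.map_comp, ← Module.End.mul_eq_comp, ← pow_succ']
  exact map_pow_fexp_stab f hX (Nat.le_succ _)

lemma fitting_map_pow_eq (hX : Submodule.map f X ≤ X) (m : ℕ) :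
    Submodule.map (f ^ m) (Submodule.map (f ^ s) X) = Submodule.map (f ^ s) X := by
  induction m with
  | zero => rw [pow_zero, Module.End.one_eq_id, Submodule.map_id]
  | succ k ih => rw [pow_succ', Module.End.mul_eq_comp, Submodule.map_comp, ih,
      fitting_map_eq f hX]

end FittingDecomp

section BracketFitting

variable {S : Submodule F L} {c : L}

lemma rmul_map_le (hS : A.IsSubalgebra S) (hc : c ∈ S) :
    Submodule.map (A.rmul c) S ≤ S := by
  rintro _ ⟨x, hx, rfl⟩
  exact hS (A.mem_prod hx hc)

/-- Brackets of generalized kernel elements stay in the generalized kernel. -/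
lemma rmul_pow_ker_bracket (c : L) (n : ℕ) :
    ∀ a b (u v : L), a + b = n → ((A.rmul c) ^ a) u = 0 → ((A.rmul c) ^ b) v = 0 →
      ((A.rmul c) ^ n) (A.bracket u v) = 0 := by
  induction n with
  | zero =>
    intro a b u v habn hu hv
    obtain ⟨rfl, rfl⟩ : a = 0 ∧ b = 0 := by omega
    rw [pow_zero, Module.End.one_apply] at hu
    subst hu
    rw [map_zero, LinearMap.zero_apply, map_zero]
  | succ n ih =>
    intro a b u v habn hu hv
    rcases Nat.eq_zero_or_pos a with rfl | ha
    · rw [pow_zero, Module.End.one_apply] at hu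
      subst hu
      rw [map_zero, LinearMap.zero_apply, map_zero]
    rcases Nat.eq_zero_or_pos b with rfl | hb
    · rw [pow_zero, Module.End.one_apply] at hv
      subst hv
      rw [map_zero, map_zero]
    obtain ⟨a', rfl⟩ : ∃ a', a = a' + 1 := ⟨a - 1, by omega⟩
    obtain ⟨b', rfl⟩ : ∃ b', b = b' + 1 := ⟨b - 1, by omega⟩
    rw [pow_succ, Module.End.mul_apply] at hu hv ⊢
    rw [A.rmul_bracket c u v, map_add]
    have h1 : ((A.rmul c) ^ n) (A.bracket u (A.rmul c v)) = 0 := by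
      refine ih (a' + 1) b' u (A.rmul c v) (by omega) ?_ hv
      rw [pow_succ, Module.End.mul_apply]; exact hu
    have h2 : ((A.rmul c) ^ n) (A.bracket (A.rmul c u) v) = 0 := by
      refine ih a' (b' + 1) (A.rmul c u) v (by omega) hu ?_
      rw [pow_succ, Module.End.mul_apply]; exact hv
    rw [h1, h2, add_zero]

end BracketFitting


section Mixed

variable {S : Submodule F L} {c : L}

/-- Key mixed lemma: brackets of a generalized-kernel element of `S` with elements of the
Fitting-one part `S₁ = map (rmul c ^ s) S` stay in `S₁` (both orders). -/
lemma bracket_ker_fittingOne (hS : A.IsSubalgebra S) (hc : c ∈ S) (a : ℕ) :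
    ∀ u ∈ S, ((A.rmul c) ^ a) u = 0 →
      ∀ v ∈ Submodule.map ((A.rmul c) ^ fexp F L) S,
        A.bracket u v ∈ Submodule.map ((A.rmul c) ^ fexp F L) S ∧
        A.bracket v u ∈ Submodule.map ((A.rmul c) ^ fexp F L) S := by
  set f := A.rmul c with hf
  set s := fexp F L with hs
  set S₁ := Submodule.map (f ^ s) S with hS₁
  have hstab : Submodule.map f S₁ = S₁ := fitting_map_eq f (A.rmul_map_le hS hc)
  induction a with
  | zero =>
    intro u hu hu0 v hv
    rw [pow_zero, Module.End.one_apply] at hu0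
    subst hu0
    constructor
    · rw [map_zero, LinearMap.zero_apply]; exact S₁.zero_mem
    · rw [map_zero]; exact S₁.zero_mem
  | succ a ih =>
    intro u hu hu0 v hv
    have hfu : f u ∈ S := A.rmul_map_le hS hc ⟨u, hu, rfl⟩
    have hfu0 : (f ^ a) (f u) = 0 := by
      rw [← Module.End.mul_apply, ← pow_succ]; exact hu0
    -- inner induction on m
    have inner : ∀ m : ℕ, ∀ v ∈ S₁,
        A.bracket u v ∈ Submodule.map (f ^ m) S ⊔ S₁ ∧
        A.bracket v u ∈ Submodule.map (f ^ m) S ⊔ S₁ := by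
      intro m
      induction m with
      | zero =>
        intro v hv
        have hvS : v ∈ S := map_pow_le f (A.rmul_map_le hS hc) s hv
        have h1 : A.bracket u v ∈ Submodule.map (f ^ 0) S := by
          rw [pow_zero, Module.End.one_eq_id, Submodule.map_id]
          exact hS (A.mem_prod hu hvS)
        have h2 : A.bracket v u ∈ Submodule.map (f ^ 0) S := by
          rw [pow_zero, Module.End.one_eq_id, Submodule.map_id]
          exact hS (A.mem_prod hvS hu)
        exact ⟨Submodule.mem_sup_left h1, Submodule.mem_sup_left h2⟩
      | succ m ihm =>
        intro v hv
        obtain ⟨w, hw, rfl⟩ : ∃ w ∈ S₁, f w = v := by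
          have : v ∈ Submodule.map f S₁ := by rw [hstab]; exact hv
          obtain ⟨w, hw, hwv⟩ := this
          exact ⟨w, hw, hwv⟩
        have hwS : w ∈ S := map_pow_le f (A.rmul_map_le hS hc) s hw
        -- derivation identity:  f [u,w] = [u, f w] + [f u, w]
        have hder1 : A.bracket u (f w) = f (A.bracket u w) - A.bracket (f u) w := by
          rw [A.rmul_bracket c u w]; abel
        have hder2 : A.bracket (f w) u = f (A.bracket w u) - A.bracket w (f u) := by
          rw [A.rmul_bracket c w u]; abel
        have hmapsup : Submodule.map f (Submodule.map (f ^ m) S ⊔ S₁)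
            ≤ Submodule.map (f ^ (m+1)) S ⊔ S₁ := by
          rw [Submodule.map_sup, hstab, pow_succ', Module.End.mul_eq_comp, Submodule.map_comp]
        obtain ⟨ih1, ih2⟩ := ihm w hw
        obtain ⟨ihL, ihR⟩ := ih (f u) hfu hfu0 w hw
        constructor
        · rw [hder1]
          refine Submodule.sub_mem _ (hmapsup ⟨A.bracket u w, ih1, rfl⟩) ?_
          exact Submodule.mem_sup_right ihL
        · rw [hder2]
          refine Submodule.sub_mem _ (hmapsup ⟨A.bracket w u, ih2, rfl⟩) ?_
          exact Submodule.mem_sup_right ihR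
    have := inner s v hv
    have hSS : Submodule.map (f ^ s) S ⊔ S₁ = S₁ := by
      rw [← hS₁, sup_idem]
    rw [hSS] at this
    exact this

end Mixed






section Engel

attribute [local instance] LieRing.ofAssociativeRing LieAlgebra.ofAssociativeAlgebra

variable {S : Submodule F L}

/-- Engel's theorem for Leibniz subalgebras: if every right multiplication by an element of
the subalgebra `S` is nilpotent on `S`, then `S` is a nilpotent subalgebra. -/
lemma isNilpotent_of_rmul_nilpotent (hS : A.IsSubalgebra S)
    (hnil : ∀ c ∈ S, ∀ x ∈ S, ((A.rmul c) ^ fexp F L) x = 0) :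
    ∃ n, A.lcs S n = ⊥ := by
  classical
  have hstab : ∀ c : ↥S, ∀ x ∈ S, A.rmul c.1 x ∈ S := by
    intro c x hx
    exact hS (A.mem_prod hx c.2)
  let σfun : ↥S → Module.End F ↥S := fun c =>
    LinearMap.restrict (A.rmul c.1) (hstab c)
  have σfun_apply : ∀ (c : ↥S) (x : ↥S), ((σfun c x : ↥S) : L) = A.bracket x.1 c.1 := by
    intro c x; rfl
  let σ : ↥S →ₗ[F] Module.End F ↥S :=
    { toFun := σfun
      map_add' := by
        intro c d; ext x
        simp only [LinearMap.add_apply, Submodule.coe_add, σfun, LinearMap.restrict_coe_apply,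
          rmul_apply]
        rw [← Submodule.coe_add c d]
        show A.bracket x.1 ((c + d : ↥S) : L) = _
        rw [Submodule.coe_add, map_add]
      map_smul' := by
        intro t c; ext x
        simp only [LinearMap.smul_apply, RingHom.id_apply, Submodule.coe_smul, σfun,
          LinearMap.restrict_coe_apply, rmul_apply]
        show A.bracket x.1 ((t • c : ↥S) : L) = _
        rw [Submodule.coe_smul, map_smul] }
  have σ_apply : ∀ (c : ↥S) (x : ↥S), ((σ c x : ↥S) : L) = A.bracket x.1 c.1 := σfun_apply
  let E : LieSubalgebra F (Module.End F ↥S) :=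
    { toSubmodule := LinearMap.range σ
      lie_mem' := by
        rintro x y ⟨c, rfl⟩ ⟨d, rfl⟩
        have hdc : A.bracket d.1 c.1 ∈ S := hS (A.mem_prod d.2 c.2)
        refine ⟨⟨A.bracket d.1 c.1, hdc⟩, ?_⟩
        ext v
        rw [Ring.lie_def]
        simp only [LinearMap.sub_apply, Module.End.mul_apply, AddSubgroupClass.coe_sub, σ_apply]
        exact A.leibniz v.1 d.1 c.1 }
  have hnilE : ∀ x : ↥E, IsNilpotent (LieModule.toEnd F ↥E ↥S x) := by
    rintro ⟨x, c, rfl⟩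
    refine ⟨fexp F L, ?_⟩
    have h0 : (LieModule.toEnd F ↥E ↥S ⟨σ c, ⟨c, rfl⟩⟩) = σ c := by
      ext w
      simp only [LieModule.toEnd_apply_apply]
      rfl
    rw [h0]
    show (LinearMap.restrict (A.rmul c.1) (hstab c)) ^ fexp F L = 0
    rw [Module.End.pow_restrict]
    ext v
    rw [LinearMap.restrict_coe_apply, hnil c.1 c.2 v.1 v.2]
    simp
  haveI : IsNoetherian F ↥E := by infer_instance
  have hEngel : LieModule.IsNilpotent ↥E ↥S :=
    LieAlgebra.isEngelian_of_isNoetherian ↥S hnilE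
  obtain ⟨k, hk⟩ := (LieModule.isNilpotent_iff F ↥E ↥S).mp hEngel
  have bridge : ∀ m, A.lcs S (m + 1) ≤
      Submodule.map S.subtype (LieModule.lowerCentralSeries F ↥E ↥S m : Submodule F ↥S) := by
    intro m
    induction m with
    | zero =>
      show A.prod S S ≤ _
      rw [LieModule.lowerCentralSeries_zero]
      refine le_trans hS ?_
      rw [LieSubmodule.top_toSubmodule, Submodule.map_subtype_top]
    | succ m ih =>
      show A.prod (A.lcs S (m + 1)) S ≤ _
      refine A.prod_le ?_
      intro w hw c hc
      obtain ⟨w', hw', rfl⟩ := ih hw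
      set X : ↥E := ⟨σ ⟨c, hc⟩, ⟨⟨c, hc⟩, rfl⟩⟩ with hX
      have hmem : (⁅X, w'⁆ : ↥S) ∈ LieModule.lowerCentralSeries F ↥E ↥S (m + 1) := by
        rw [LieModule.lowerCentralSeries_succ]
        exact LieSubmodule.lie_mem_lie (LieSubmodule.mem_top _)
          ((LieSubmodule.mem_toSubmodule _).mp hw')
      refine ⟨⁅X, w'⁆, (LieSubmodule.mem_toSubmodule _).mpr hmem, ?_⟩
      have h1 : (⁅X, w'⁆ : ↥S) = σ ⟨c, hc⟩ w' := by
        rw [LieSubalgebra.coe_bracket_of_module]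
        rfl
      show ((⁅X, w'⁆ : ↥S) : L) = A.bracket (S.subtype w') c
      rw [h1, σ_apply]
      rfl
  refine ⟨k + 1, ?_⟩
  have hb := bridge k
  rw [hk] at hb
  rw [eq_bot_iff]
  refine le_trans hb ?_
  rw [LieSubmodule.bot_toSubmodule, Submodule.map_bot]

end Engel


section KeyLemma

open Submodule

/-- The central recursion: if `z` lies in `S` and centralizes the subalgebra `S`, and
`z ∈ [S,S] + (M̂ ⊓ S)` for a two-sided ideal `M̂` containing `[[S,S],[S,S]]`, then `z ∈ M̂`. -/
lemma keyP (hA : A.IsAAlgebra) :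
    ∀ (n : ℕ) (S Mh : Submodule F L) (z : L),
      Module.finrank F ↥S ≤ n →
      A.IsSubalgebra S →
      A.prod Mh ⊤ ≤ Mh →
      A.prod (A.prod S S) (A.prod S S) ≤ Mh →
      z ∈ S → (∀ u ∈ S, A.bracket z u = 0) →
      z ∈ A.prod S S ⊔ (Mh ⊓ S) → z ∈ Mh := by
  intro n
  induction n with
  | zero =>
    intro S Mh z hfr hSsub hMh1 hsq hzS hzc hzsup
    have hS0 : S = ⊥ := by
      rw [← Submodule.finrank_eq_zero (R := F) (M := L)]
      omega
    rw [hS0, Submodule.mem_bot] at hzS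
    subst hzS
    exact Mh.zero_mem
  | succ n ih =>
    intro S Mh z hfr hSsub hMh1 hsq hzS hzc hzsup
    by_cases hcase : ∃ c ∈ S, Submodule.map ((A.rmul c) ^ fexp F L) S ≠ ⊥
    · obtain ⟨c, hc, hS1ne⟩ := hcase
      set f := A.rmul c with hf
      set s := fexp F L with hsdef
      have hfS : Submodule.map f S ≤ S := A.rmul_map_le hSsub hc
      set S₀ := S ⊓ LinearMap.ker (f ^ s) with hS₀def
      set S₁ := Submodule.map (f ^ s) S with hS₁def
      have hS₀S : S₀ ≤ S := inf_le_left
      have hS₁S : S₁ ≤ S := map_pow_le f hfS s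
      have hdecomp : S ≤ S₀ ⊔ S₁ := fitting_decomp f hfS
      have hdisj : S₀ ⊓ S₁ = ⊥ := fitting_disjoint f hfS
      -- S₀ is a subalgebra
      have hS₀sub : A.IsSubalgebra S₀ := by
        refine A.prod_le ?_
        rintro u ⟨huS, huk⟩ v ⟨hvS, hvk⟩
        refine Submodule.mem_inf.mpr ⟨hSsub (A.mem_prod huS hvS), ?_⟩
        rw [LinearMap.mem_ker]
        rw [SetLike.mem_coe, LinearMap.mem_ker] at huk hvk
        have h2s := A.rmul_pow_ker_bracket c (s + s) s s u v rfl huk hvk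
        have := ker_pow_fexp_stab (F := F) f (Nat.le_add_right s s)
        rw [← LinearMap.mem_ker, this, LinearMap.mem_ker] at h2s
        exact h2s
      -- z lies in S₀
      have hzS₀ : z ∈ S₀ := by
        refine Submodule.mem_inf.mpr ⟨hzS, ?_⟩
        rw [LinearMap.mem_ker]
        obtain ⟨s', hs'⟩ : ∃ s', s = s' + 1 := ⟨s - 1, by have := fexp_pos (F := F) (L := L); omega⟩
        rw [hs', pow_succ, Module.End.mul_apply]
        have : f z = 0 := hzc c hc
        rw [this, map_zero]
      -- S₁ is inside [S,S]
      have hS₁prod : S₁ ≤ A.prod S S := by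
        obtain ⟨s', hs'⟩ : ∃ s', s = s' + 1 := ⟨s - 1, by have := fexp_pos (F := F) (L := L); omega⟩
        rw [hS₁def, hs', pow_succ', Module.End.mul_eq_comp, Submodule.map_comp]
        rintro _ ⟨x, hx, rfl⟩
        have hxS : x ∈ S := map_pow_le f hfS s' hx
        exact A.mem_prod hxS hc
      -- product bounds
      have hP01 : A.prod S₀ S₁ ≤ S₁ := by
        refine A.prod_le ?_
        rintro u ⟨huS, huk⟩ v hv
        rw [SetLike.mem_coe, LinearMap.mem_ker] at huk
        exact (A.bracket_ker_fittingOne hSsub hc s u huS huk v hv).1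
      have hP10 : A.prod S₁ S₀ ≤ S₁ := by
        refine A.prod_le ?_
        rintro v hv u ⟨huS, huk⟩
        rw [SetLike.mem_coe, LinearMap.mem_ker] at huk
        exact (A.bracket_ker_fittingOne hSsub hc s u huS huk v hv).2
      have hP11 : A.prod S₁ S₁ ≤ Mh ⊓ S := by
        refine le_inf ?_ ?_
        · exact le_trans (A.prod_mono hS₁prod hS₁prod) hsq
        · exact le_trans (A.prod_mono hS₁S hS₁S) hSsub
      -- splitting of [S,S]
      set W := Mh ⊓ S with hWdef
      have hSS_le : A.prod S S ≤ A.prod S₀ S₀ ⊔ (S₁ ⊔ W) := by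
        refine le_trans (A.prod_mono hdecomp hdecomp) ?_
        refine le_trans (A.prod_sup_left) ?_
        refine sup_le ?_ ?_
        · refine le_trans (A.prod_sup_right) ?_
          refine sup_le le_sup_left ?_
          exact le_trans hP01 (le_trans le_sup_left le_sup_right)
        · refine le_trans (A.prod_sup_right) ?_
          refine sup_le ?_ ?_
          · exact le_trans hP10 (le_trans le_sup_left le_sup_right)
          · exact le_trans hP11 (le_trans le_sup_right le_sup_right)
      -- W is f-stable and splits
      have hfW : Submodule.map f W ≤ W := by
        rintro _ ⟨w, hw, rfl⟩
        refine Submodule.mem_inf.mpr ⟨?_, ?_⟩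
        · exact hMh1 (A.mem_prod (Submodule.mem_inf.mp hw).1 (Submodule.mem_top))
        · exact hfS ⟨w, (Submodule.mem_inf.mp hw).2, rfl⟩
      have hWdec : W ≤ (W ⊓ LinearMap.ker (f ^ s)) ⊔ Submodule.map (f ^ s) W :=
        fitting_decomp f hfW
      have hW₁ : Submodule.map (f ^ s) W ≤ S₁ := Submodule.map_mono inf_le_right
      have hW₀ : W ⊓ LinearMap.ker (f ^ s) ≤ Mh ⊓ S₀ := by
        rintro x ⟨⟨hxM, hxS⟩, hxk⟩
        exact Submodule.mem_inf.mpr ⟨hxM, Submodule.mem_inf.mpr ⟨hxS, hxk⟩⟩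
      -- decompose z
      have hz2 : z ∈ A.prod S₀ S₀ ⊔ (S₁ ⊔ W) := by
        refine (sup_le hSS_le ?_) hzsup
        exact le_trans le_sup_right le_sup_right
      obtain ⟨a, ha, y, hy, hzay⟩ := Submodule.mem_sup.mp hz2
      have hyW' : y ∈ S₁ ⊔ (Mh ⊓ S₀) := by
        have : S₁ ⊔ W ≤ S₁ ⊔ (Mh ⊓ S₀) := by
          refine sup_le le_sup_left ?_
          refine le_trans hWdec ?_
          refine sup_le ?_ ?_
          · exact le_trans hW₀ le_sup_right
          · exact le_trans hW₁ le_sup_left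
        exact this hy
      obtain ⟨t, ht, w₀, hw₀, hytw⟩ := Submodule.mem_sup.mp hyW'
      have haS₀ : a ∈ S₀ := hS₀sub ha
      have hyS₀ : y ∈ S₀ := by
        have : y = z - a := by rw [← hzay]; abel
        rw [this]
        exact S₀.sub_mem hzS₀ haS₀
      have ht0 : t = 0 := by
        have htS₀ : t ∈ S₀ := by
          have : t = y - w₀ := by rw [← hytw]; abel
          rw [this]
          exact S₀.sub_mem hyS₀ (Submodule.mem_inf.mp hw₀).2
        have : t ∈ S₀ ⊓ S₁ := Submodule.mem_inf.mpr ⟨htS₀, ht⟩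
        rw [hdisj, Submodule.mem_bot] at this
        exact this
      have hzfin : z ∈ A.prod S₀ S₀ ⊔ (Mh ⊓ S₀) := by
        rw [← hzay, ← hytw, ht0, zero_add]
        exact Submodule.add_mem_sup ha hw₀
      -- dimension drop
      have hfrS₀ : Module.finrank F ↥S₀ ≤ n := by
        have hsum := Submodule.finrank_sup_add_finrank_inf_eq S₀ S₁
        rw [hdisj] at hsum
        have hS0S1 : S₀ ⊔ S₁ = S := le_antisymm (sup_le hS₀S hS₁S) hdecomp
        rw [hS0S1] at hsum
        have h1 : Module.finrank F ↥S₁ ≠ 0 := by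
          intro h0
          exact hS1ne (Submodule.finrank_eq_zero.mp h0)
        have hbot : Module.finrank F (⊥ : Submodule F L) = 0 := finrank_bot F L
        omega
      -- recurse
      refine ih S₀ Mh z hfrS₀ hS₀sub hMh1 ?_ hzS₀ ?_ hzfin
      · exact le_trans (A.prod_mono (A.prod_mono hS₀S hS₀S) (A.prod_mono hS₀S hS₀S)) hsq
      · intro u hu
        exact hzc u (hS₀S hu)
    · -- terminal case : all right multiplications nilpotent on S
      push_neg at hcase
      have hnil : ∀ c ∈ S, ∀ x ∈ S, ((A.rmul c) ^ fexp F L) x = 0 := by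
        intro c hc x hx
        have : ((A.rmul c) ^ fexp F L) x ∈ Submodule.map ((A.rmul c) ^ fexp F L) S :=
          ⟨x, hx, rfl⟩
        rw [hcase c hc, Submodule.mem_bot] at this
        exact this
      have hnilS : A.IsNilpotentSub S := A.isNilpotent_of_rmul_nilpotent hSsub hnil
      have hab : A.prod S S = ⊥ := hA S hSsub hnilS
      rw [hab, bot_sup_eq] at hzsup
      exact (Submodule.mem_inf.mp hzsup).1

end KeyLemma


section Final

lemma derSeries_succ_le (j : ℕ) : A.derSeries (j + 1) ≤ A.derSeries j := by
  induction j with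
  | zero => exact le_top
  | succ j ih =>
    show A.prod (A.derSeries (j+1)) (A.derSeries (j+1)) ≤ A.prod (A.derSeries j) (A.derSeries j)
    exact A.prod_mono ih ih

lemma derSeries_ideal (j : ℕ) : A.prod (A.derSeries j) ⊤ ≤ A.derSeries j := by
  induction j with
  | zero => exact le_top
  | succ j ih =>
    refine A.prod_le ?_
    intro w hw x _
    have hcomap : A.derSeries (j + 1) ≤ Submodule.comap (A.rmul x) (A.derSeries (j + 1)) := by
      show A.prod (A.derSeries j) (A.derSeries j) ≤ _
      rw [prod, Submodule.span_le]
      rintro _ ⟨a, ha, b, hb, rfl⟩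
      rw [SetLike.mem_coe, Submodule.mem_comap]
      have hrb : A.bracket b x ∈ A.derSeries j := ih (A.mem_prod hb Submodule.mem_top)
      have hra : A.bracket a x ∈ A.derSeries j := ih (A.mem_prod ha Submodule.mem_top)
      have hder := A.rmul_bracket x a b
      rw [rmul_apply] at hder
      show A.bracket (A.bracket a b) x ∈ A.prod (A.derSeries j) (A.derSeries j)
      rw [hder]
      exact Submodule.add_mem _ (A.mem_prod ha hrb) (A.mem_prod hra hb)
    exact hcomap hw

lemma claim (hA : A.IsAAlgebra) :
    ∀ (i j : ℕ), A.derSeries (j + i) = ⊥ →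
      ∀ z, (∀ u ∈ A.derSeries j, A.bracket z u = 0) → z ∈ A.derSeries (j + 1) → z = 0 := by
  intro i
  induction i with
  | zero =>
    intro j hbot z hzc hz
    have : z ∈ A.derSeries j := A.derSeries_succ_le j hz
    rw [Nat.add_zero] at hbot
    rw [hbot, Submodule.mem_bot] at this
    exact this
  | succ i ih =>
    intro j hbot z hzc hz
    have hz2 : z ∈ A.derSeries (j + 2) := by
      refine A.keyP hA (Module.finrank F ↥(A.derSeries j)) (A.derSeries j)
        (A.derSeries (j + 2)) z le_rfl (A.derSeries_succ_le j) (A.derSeries_ideal (j + 2))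
        ?_ (A.derSeries_succ_le j hz) hzc ?_
      · show A.prod (A.derSeries (j+1)) (A.derSeries (j+1)) ≤ A.derSeries (j+2)
        exact le_rfl
      · exact Submodule.mem_sup_left hz
    refine ih (j + 1) ?_ z ?_ hz2
    · rw [show j + 1 + i = j + (i + 1) by omega]
      exact hbot
    · intro u hu
      exact hzc u (A.derSeries_succ_le j hu)

theorem main (hA : A.IsAAlgebra) (hsolv : A.IsSolvable) :
    A.centerOf ⊤ ⊓ A.derSeries 1 = ⊥ := by
  rw [eq_bot_iff]
  rintro z hz
  rw [Submodule.mem_inf] at hz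
  obtain ⟨hzc, hzd⟩ := hz
  have hzc' : ∀ u ∈ (⊤ : Submodule F L), A.bracket z u = 0 := by
    intro u hu
    have := (Submodule.mem_inf.mp hzc).2
    exact (this u hu).1
  obtain ⟨n, hn⟩ := hsolv
  rw [Submodule.mem_bot]
  refine A.claim hA n 0 ?_ z ?_ ?_
  · rw [Nat.zero_add]; exact hn
  · intro u hu; exact hzc' u Submodule.mem_top
  · exact hzd

end Final

end LeibnizAlg

/-- For a solvable Leibniz A-algebra `L`, `Z(L) ∩ L² = 0`. -/
theorem center_inf_derived_eq_bot
    {F L : Type*} [Field F] [AddCommGroup L] [Module F L] [FiniteDimensional F L]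
    (A : LeibnizAlg F L) (hA : A.IsAAlgebra) (hsolv : A.IsSolvable) :
    A.centerOf ⊤ ⊓ A.derSeries 1 = ⊥ :=
  LeibnizAlg.main A hA hsolv
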